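/- arXiv:1905.08519 — 2 statements merged into one kernel-verified Lean document; each statement's English description precedes it below -/
import Mathlib

section
/- If K ⊆ L are compact convex subsets of ℝ³, then the surface area of K is at most the surface area of L. -/
open MeasureTheory

variable {E : Type*} [NormedAddCommGroup E] [InnerProductSpace ℝ E] [CompleteSpace E]

local notation "⟪" x ", " y "⟫" => @inner ℝ _ _ x y

/-- Existence of a projection with the variational characterization. -/
lemma exists_proj_char {K : Set E} (hKc : IsCompact K) (hKconv : Convex ℝ K)
    (hne : K.Nonempty) :
    ∃ p : E → E, (∀ u, p u ∈ K) ∧ ∀ u, ∀ w ∈ K, ⟪u - p u, w - p u⟫ ≤ 0 := by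
  have hcomp : IsComplete K := hKc.isClosed.isComplete
  choose p hpK hpd using exists_norm_eq_iInf_of_complete_convex hne hcomp hKconv
  exact ⟨p, hpK, fun u => (norm_eq_iInf_iff_real_inner_le_zero hKconv (hpK u)).mp (hpd u)⟩

omit [CompleteSpace E] in
lemma proj_unique {K : Set E} {p : E → E} (hpK : ∀ u, p u ∈ K)
    (hchar : ∀ u, ∀ w ∈ K, ⟪u - p u, w - p u⟫ ≤ 0)
    {u x : E} (hx : x ∈ K) (hxchar : ∀ w ∈ K, ⟪u - x, w - x⟫ ≤ 0) : p u = x := by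
  have h1 := hchar u x hx
  have h2 := hxchar (p u) (hpK u)
  have key : ⟪u - p u, x - p u⟫ = ‖x - p u‖ ^ 2 + ⟪u - x, x - p u⟫ := by
    rw [show u - p u = (x - p u) + (u - x) by abel, inner_add_left,
      real_inner_self_eq_norm_sq]
  have h2' : ⟪u - x, p u - x⟫ = -⟪u - x, x - p u⟫ := by
    rw [show p u - x = -(x - p u) by abel, inner_neg_right]
  have hsq : ‖x - p u‖ ^ 2 ≤ 0 := by linarith
  have hn : ‖x - p u‖ = 0 := by nlinarith [norm_nonneg (x - p u)]
  have := sub_eq_zero.mp (norm_eq_zero.mp hn)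
  exact this.symm

omit [CompleteSpace E] in
lemma proj_lipschitz {K : Set E} {p : E → E} (hpK : ∀ u, p u ∈ K)
    (hchar : ∀ u, ∀ w ∈ K, ⟪u - p u, w - p u⟫ ≤ 0) : LipschitzWith 1 p := by
  rw [lipschitzWith_iff_dist_le_mul]
  intro u₁ u₂
  rw [NNReal.coe_one, one_mul, dist_eq_norm, dist_eq_norm]
  set a := p u₁
  set b := p u₂
  have h1 := hchar u₁ b (hpK u₂)
  have h2 := hchar u₂ a (hpK u₁)
  have key : ⟪u₁ - u₂, a - b⟫ = ⟪u₁ - a, a - b⟫ + ‖a - b‖ ^ 2 + ⟪b - u₂, a - b⟫ := by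
    rw [show u₁ - u₂ = (u₁ - a) + (a - b) + (b - u₂) by abel, inner_add_left, inner_add_left,
      real_inner_self_eq_norm_sq]
  have e1 : ⟪u₁ - a, a - b⟫ = -⟪u₁ - a, b - a⟫ := by
    rw [show a - b = -(b - a) by abel, inner_neg_right]
  have e2 : ⟪b - u₂, a - b⟫ = -⟪u₂ - b, a - b⟫ := by
    rw [show b - u₂ = -(u₂ - b) by abel, inner_neg_left]
  have hcs := real_inner_le_norm (u₁ - u₂) (a - b)
  have hsq : ‖a - b‖ ^ 2 ≤ ‖u₁ - u₂‖ * ‖a - b‖ := by linarith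
  rcases eq_or_lt_of_le (norm_nonneg (a - b)) with h0 | h0
  · rw [← h0]; exact norm_nonneg _
  · nlinarith

omit [CompleteSpace E] in
lemma proj_self {K : Set E} {p : E → E} (hpK : ∀ u, p u ∈ K)
    (hchar : ∀ u, ∀ w ∈ K, ⟪u - p u, w - p u⟫ ≤ 0) {z : E} (hz : z ∈ K) : p z = z :=
  proj_unique hpK hchar hz (fun w _ => by simp)

omit [CompleteSpace E] in
lemma proj_mem_frontier {K : Set E} (hKcl : IsClosed K) {p : E → E} (hpK : ∀ u, p u ∈ K)
    (hchar : ∀ u, ∀ w ∈ K, ⟪u - p u, w - p u⟫ ≤ 0) {z : E} (hz : z ∉ interior K) :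
    p z ∈ frontier K := by
  by_cases hzK : z ∈ K
  · rw [proj_self hpK hchar hzK]
    rw [hKcl.frontier_eq]
    exact ⟨hzK, hz⟩
  · rw [hKcl.frontier_eq]
    refine ⟨hpK z, fun hint => ?_⟩
    obtain ⟨δ, hδ, hball⟩ := Metric.isOpen_iff.mp isOpen_interior _ hint
    have hza : z - p z ≠ 0 := by
      intro h
      exact hzK (sub_eq_zero.mp h ▸ hpK z)
    have hzapos : 0 < ‖z - p z‖ := norm_pos_iff.mpr hza
    set s : ℝ := δ / (2 * ‖z - p z‖) with hs
    have hspos : 0 < s := div_pos hδ (by positivity)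
    have hq : p z + s • (z - p z) ∈ K := by
      apply interior_subset
      apply hball
      rw [Metric.mem_ball, dist_eq_norm]
      have : ‖p z + s • (z - p z) - p z‖ = s * ‖z - p z‖ := by
        rw [add_sub_cancel_left, norm_smul, Real.norm_of_nonneg hspos.le]
      rw [this, hs]
      rw [div_mul_eq_mul_div]
      rw [div_lt_iff₀ (by positivity)]
      nlinarith
    have := hchar z _ hq
    rw [add_sub_cancel_left, real_inner_smul_right, real_inner_self_eq_norm_sq] at this
    nlinarith [mul_pos hspos (pow_pos hzapos 2)]

lemma frontier_subset_proj_image {K L : Set E} (hKc : IsCompact K) (hKconv : Convex ℝ K)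
    (hKint : (interior K).Nonempty) (hLc : IsCompact L) (hKL : K ⊆ L)
    {p : E → E} (hpK : ∀ u, p u ∈ K)
    (hchar : ∀ u, ∀ w ∈ K, ⟪u - p u, w - p u⟫ ≤ 0) :
    frontier K ⊆ p '' frontier L := by
  intro x hx
  have hxK : x ∈ K := hKc.isClosed.frontier_subset hx
  have hxint : x ∉ interior K := hx.2
  by_cases hxL : x ∈ frontier L
  · exact ⟨x, hxL, proj_self hpK hchar hxK⟩
  · -- x is in the interior of L
    have hxintL : x ∈ interior L := by
      by_contra h'
      exact hxL (hLc.isClosed.frontier_eq ▸ (⟨hKL hxK, h'⟩ : x ∈ L \ interior L))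
    -- supporting functional at x for K
    obtain ⟨f, hf⟩ := geometric_hahn_banach_open_point hKconv.interior isOpen_interior hxint
    obtain ⟨y0, hy0⟩ := hKint
    set v : E := (InnerProductSpace.toDual ℝ E).symm f with hv
    have hvf : ∀ w : E, ⟪v, w⟫ = f w := fun w => InnerProductSpace.toDual_symm_apply
    have hvne : v ≠ 0 := by
      intro h
      have h1 : f y0 = 0 := by rw [← hvf y0, h, inner_zero_left]
      have h2 : f x = 0 := by rw [← hvf x, h, inner_zero_left]
      have := hf y0 hy0
      rw [h1, h2] at this
      exact lt_irrefl 0 this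
    have hvpos : 0 < ‖v‖ := norm_pos_iff.mpr hvne
    -- f ≤ f x on K
    have hfK : ∀ y ∈ K, f y ≤ f x := by
      intro y hy
      have hcont : Continuous fun t : ℝ => f (t • y0 + (1 - t) • y) := by
        fun_prop
      have h0 : Filter.Tendsto (fun t : ℝ => f (t • y0 + (1 - t) • y))
          (nhdsWithin 0 (Set.Ioi 0)) (nhds (f y)) := by
        have h := (hcont.tendsto 0).mono_left (nhdsWithin_le_nhds (s := Set.Ioi (0:ℝ)))
        simpa using h
      refine le_of_tendsto h0 ?_
      filter_upwards [Ioo_mem_nhdsGT_of_mem (Set.mem_Ico.mpr ⟨le_refl (0:ℝ), one_pos⟩)]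
        with t ht
      exact (hf _ (hKconv.combo_interior_closure_mem_interior hy0 (subset_closure hy)
        ht.1 (by linarith [ht.2]) (by ring))).le
    -- the ray from x in direction v
    set S : Set ℝ := Set.Ici (0:ℝ) ∩ (fun t => x + t • v) ⁻¹' L with hS
    have hS0 : (0:ℝ) ∈ S := ⟨Set.mem_Ici.mpr le_rfl, by simpa using hKL hxK⟩
    have hSclosed : IsClosed S :=
      isClosed_Ici.inter (hLc.isClosed.preimage (by fun_prop))
    obtain ⟨R, hR⟩ := hLc.isBounded.subset_closedBall 0
    have hbdd : BddAbove S := by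
      refine ⟨(R + ‖x‖) / ‖v‖, fun t ht => ?_⟩
      rw [le_div_iff₀ hvpos]
      have h1 : ‖x + t • v‖ ≤ R := by simpa using hR ht.2
      have h2 : ‖t • v‖ ≤ ‖x + t • v‖ + ‖x‖ := by
        calc ‖t • v‖ = ‖x + t • v - x‖ := by rw [add_sub_cancel_left]
          _ ≤ ‖x + t • v‖ + ‖x‖ := norm_sub_le _ _
      rw [norm_smul, Real.norm_of_nonneg ht.1] at h2
      linarith
    set t₀ : ℝ := sSup S with ht₀
    have ht₀S : t₀ ∈ S := hSclosed.csSup_mem ⟨0, hS0⟩ hbdd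
    -- t₀ > 0
    obtain ⟨ε, hε, hball⟩ := Metric.isOpen_iff.mp isOpen_interior _ hxintL
    have ht1 : ε / (2 * ‖v‖) ∈ S := by
      refine ⟨Set.mem_Ici.mpr (by positivity), ?_⟩
      show x + (ε / (2 * ‖v‖)) • v ∈ L
      refine interior_subset (hball ?_)
      rw [Metric.mem_ball, dist_eq_norm, add_sub_cancel_left, norm_smul,
        Real.norm_of_nonneg (by positivity)]
      rw [div_mul_eq_mul_div, div_lt_iff₀ (by positivity)]
      nlinarith
    have ht₀pos : 0 < t₀ := lt_of_lt_of_le (by positivity) (le_csSup hbdd ht1)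
    -- the boundary point
    refine ⟨x + t₀ • v, ?_, ?_⟩
    · rw [hLc.isClosed.frontier_eq]
      refine ⟨ht₀S.2, fun hmem => ?_⟩
      obtain ⟨δ, hδ, hball'⟩ := Metric.isOpen_iff.mp isOpen_interior _ hmem
      have ht' : t₀ + δ / (2 * ‖v‖) ∈ S := by
        refine ⟨Set.mem_Ici.mpr (by have h0 := Set.mem_Ici.mp ht₀S.1; positivity), ?_⟩
        show x + (t₀ + δ / (2 * ‖v‖)) • v ∈ L
        refine interior_subset (hball' ?_)
        rw [Metric.mem_ball, dist_eq_norm]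
        have heq : x + (t₀ + δ / (2 * ‖v‖)) • v - (x + t₀ • v) = (δ / (2 * ‖v‖)) • v := by
          rw [add_smul]; abel
        rw [heq, norm_smul, Real.norm_of_nonneg (by positivity)]
        rw [div_mul_eq_mul_div, div_lt_iff₀ (by positivity)]
        nlinarith
      have := le_csSup hbdd ht'
      have hpos : 0 < δ / (2 * ‖v‖) := by positivity
      linarith
    · refine proj_unique hpK hchar hxK (fun w hw => ?_)
      rw [add_sub_cancel_left, real_inner_smul_left, hvf]
      have : f (w - x) ≤ 0 := by
        rw [map_sub]
        linarith [hfK w hw]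
      exact mul_nonpos_of_nonneg_of_nonpos ht₀S.1 this

/-- Archimedes' Assumption 4: a convex body in ℝ³ included in another has smaller surface area. -/
theorem surfaceArea_mono_of_convex (K L : Set (EuclideanSpace ℝ (Fin 3)))
    (hKc : IsCompact K) (hKconv : Convex ℝ K) (hKint : (interior K).Nonempty)
    (hLc : IsCompact L) (hLconv : Convex ℝ L) (hLint : (interior L).Nonempty)
    (hKL : K ⊆ L) :
    μH[2] (frontier K) ≤ μH[2] (frontier L) := by
  obtain ⟨p, hpK, hchar⟩ := exists_proj_char hKc hKconv (hKint.mono interior_subset)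
  have himg : p '' frontier L = frontier K := by
    apply Set.Subset.antisymm
    · rintro _ ⟨z, hz, rfl⟩
      apply proj_mem_frontier hKc.isClosed hpK hchar
      intro h
      exact hz.2 (interior_mono hKL h)
    · exact frontier_subset_proj_image hKc hKconv hKint hLc hKL hpK hchar
  rw [← himg]
  have h := (proj_lipschitz hpK hchar).hausdorffMeasure_image_le
    (by norm_num : (0:ℝ) ≤ 2) (frontier L)
  simpa using h
end

section
/- Converse of Ptolemy: four points A, B, C, D in the plane forming a convex quadrilateral in that order lie on a common circle if and only if |AC|·|BD| = |AB|·|CD| + |AD|·|BC|. -/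
open EuclideanGeometry

/-- A point `x ≠ 0` is on the sphere with center `v` through `0` iff its inversion `x/‖x‖²`
has inner product `1/2` with `v`. -/
lemma inversion_sphere_aux {V : Type*} [NormedAddCommGroup V] [InnerProductSpace ℝ V]
    {x v : V} (hx : x ≠ 0) :
    ‖x - v‖ = ‖v‖ ↔ inner ℝ ((1 / ‖x‖) ^ 2 • x) v = (1 / 2 : ℝ) := by
  have hxn : ‖x‖ ≠ 0 := norm_ne_zero_iff.2 hx
  have h1 : ‖x - v‖ = ‖v‖ ↔ ‖x - v‖ ^ 2 = ‖v‖ ^ 2 := by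
    constructor
    · intro h; rw [h]
    · intro h
      nlinarith [norm_nonneg (x - v), norm_nonneg v]
  rw [h1, norm_sub_sq_real, real_inner_smul_left]
  constructor
  · intro h
    have h2 : inner ℝ x v = ‖x‖ ^ 2 / 2 := by nlinarith
    rw [h2]; field_simp
  · intro h
    have h2 : (inner ℝ x v : ℝ) = ‖x‖ ^ 2 / 2 := by
      field_simp at h; nlinarith [sq_nonneg ‖x‖]
    nlinarith

/-- Converse of Ptolemy: a (nondegenerate) convex quadrilateral `ABCD`, with diagonals
`AC` and `BD` crossing, is cyclic iff Ptolemy's equality holds. -/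
theorem ptolemy_iff_concyclic (A B C D : EuclideanSpace ℝ (Fin 2))
    (hconv : (openSegment ℝ A C ∩ openSegment ℝ B D).Nonempty)
    (hncol : ¬ Collinear ℝ ({A, B, C, D} : Set (EuclideanSpace ℝ (Fin 2)))) :
    (∃ c r, dist A c = r ∧ dist B c = r ∧ dist C c = r ∧ dist D c = r) ↔
      dist A C * dist B D = dist A B * dist C D + dist A D * dist B C := by
  obtain ⟨P, hP1, hP2⟩ := hconv
  -- basic nondegeneracy
  have hAC : A ≠ C := by
    rintro rfl
    rw [openSegment_same] at hP1
    rw [Set.mem_singleton_iff] at hP1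
    subst hP1
    have hw : Wbtw ℝ B P D := mem_segment_iff_wbtw.1 (openSegment_subset_segment _ _ _ hP2)
    exact hncol (hw.collinear.subset (by intro x hx; simp at hx ⊢; tauto))
  have hBD : B ≠ D := by
    rintro rfl
    rw [openSegment_same] at hP2
    rw [Set.mem_singleton_iff] at hP2
    subst hP2
    have hw : Wbtw ℝ A P C := mem_segment_iff_wbtw.1 (openSegment_subset_segment _ _ _ hP1)
    exact hncol (hw.collinear.subset (by intro x hx; simp at hx ⊢; tauto))
  have sAPC : Sbtw ℝ A P C := by
    refine ⟨mem_segment_iff_wbtw.1 (openSegment_subset_segment _ _ _ hP1), ?_, ?_⟩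
    · rintro rfl; exact hAC (left_mem_openSegment_iff.1 hP1)
    · rintro rfl; exact hAC (right_mem_openSegment_iff.1 hP1)
  have sBPD : Sbtw ℝ B P D := by
    refine ⟨mem_segment_iff_wbtw.1 (openSegment_subset_segment _ _ _ hP2), ?_, ?_⟩
    · rintro rfl; exact hBD (left_mem_openSegment_iff.1 hP2)
    · rintro rfl; exact hBD (right_mem_openSegment_iff.1 hP2)
  have hPline : P ∈ line[ℝ, A, C] := sAPC.wbtw.mem_affineSpan
  -- key degeneracy lemma
  have key : ∀ X Y : EuclideanSpace ℝ (Fin 2), Sbtw ℝ X P Y → X ∈ line[ℝ, A, C] →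
      Collinear ℝ ({X, Y, A, C} : Set (EuclideanSpace ℝ (Fin 2))) := by
    intro X Y hs hX
    have h1 : Y ∈ line[ℝ, X, P] :=
      hs.wbtw.collinear.mem_affineSpan_of_mem_of_ne (Set.mem_insert _ _)
        (Set.mem_insert_of_mem _ (Set.mem_insert _ _))
        (Set.mem_insert_of_mem _ (Set.mem_insert_of_mem _ rfl)) hs.ne_left.symm
    have h2 : line[ℝ, X, P] ≤ line[ℝ, A, C] := by
      rw [affineSpan_le]
      rintro x (rfl | hx)
      · exact hX
      · rw [Set.mem_singleton_iff] at hx; subst hx; exact hPline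
    exact collinear_insert_insert_of_mem_affineSpan_pair (h2 h1) hX |>.subset
      (by intro x hx; simp at hx ⊢; tauto)
  have hBA : B ≠ A := by
    rintro rfl
    exact hncol ((key B D sBPD (left_mem_affineSpan_pair ℝ B C)).subset
      (by intro x hx; simp at hx ⊢; tauto))
  have hBC : B ≠ C := by
    rintro rfl
    exact hncol ((key B D sBPD (right_mem_affineSpan_pair ℝ A B)).subset
      (by intro x hx; simp at hx ⊢; tauto))
  have hDA : D ≠ A := by
    rintro rfl
    exact hncol ((key D B sBPD.symm (left_mem_affineSpan_pair ℝ D C)).subset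
      (by intro x hx; simp at hx ⊢; tauto))
  have hABC : ¬ Collinear ℝ ({A, B, C} : Set (EuclideanSpace ℝ (Fin 2))) := by
    intro hcol
    have hB : B ∈ line[ℝ, A, C] :=
      hcol.mem_affineSpan_of_mem_of_ne (Set.mem_insert _ _)
        (Set.mem_insert_of_mem _ (Set.mem_insert_of_mem _ rfl))
        (Set.mem_insert_of_mem _ (Set.mem_insert _ _)) hAC
    exact hncol ((key B D sBPD hB).subset (by intro x hx; simp at hx ⊢; tauto))
  constructor
  · -- cyclic → Ptolemy, using mathlib's Ptolemy theorem
    rintro ⟨o, r, h1, h2, h3, h4⟩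
    have hcos : Cospherical ({A, B, C, D} : Set (EuclideanSpace ℝ (Fin 2))) := by
      refine ⟨o, r, ?_⟩
      intro p hp
      simp only [Set.mem_insert_iff, Set.mem_singleton_iff] at hp
      rcases hp with rfl | rfl | rfl | rfl <;> assumption
    have hapc : ∠ A P C = Real.pi := angle_eq_pi_iff_sbtw.2 sAPC
    have hbpd : ∠ B P D = Real.pi := angle_eq_pi_iff_sbtw.2 sBPD
    have := mul_dist_add_mul_dist_eq_mul_dist_of_cospherical hcos hapc hbpd
    rw [dist_comm D A] at this
    linarith
  · -- Ptolemy → cyclic, via inversion at A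
    intro hpt
    set b : EuclideanSpace ℝ (Fin 2) := B - A with hb_def
    set c : EuclideanSpace ℝ (Fin 2) := C - A with hc_def
    set d : EuclideanSpace ℝ (Fin 2) := D - A with hd_def
    have hb : b ≠ 0 := sub_ne_zero.2 hBA
    have hc : c ≠ 0 := sub_ne_zero.2 (Ne.symm hAC)
    have hd : d ≠ 0 := sub_ne_zero.2 hDA
    have hbn : ‖b‖ ≠ 0 := norm_ne_zero_iff.2 hb
    have hcn : ‖c‖ ≠ 0 := norm_ne_zero_iff.2 hc
    have hdn : ‖d‖ ≠ 0 := norm_ne_zero_iff.2 hd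
    set b' : EuclideanSpace ℝ (Fin 2) := (1 / ‖b‖) ^ 2 • b with hb'_def
    set c' : EuclideanSpace ℝ (Fin 2) := (1 / ‖c‖) ^ 2 • c with hc'_def
    set d' : EuclideanSpace ℝ (Fin 2) := (1 / ‖d‖) ^ 2 • d with hd'_def
    have e1 : dist b' c' = 1 ^ 2 / (‖b‖ * ‖c‖) * dist b c := dist_div_norm_sq_smul hb hc 1
    have e2 : dist c' d' = 1 ^ 2 / (‖c‖ * ‖d‖) * dist c d := dist_div_norm_sq_smul hc hd 1
    have e3 : dist b' d' = 1 ^ 2 / (‖b‖ * ‖d‖) * dist b d := dist_div_norm_sq_smul hb hd 1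
    -- rewrite Ptolemy in terms of vectors
    have dAC : dist A C = ‖c‖ := by rw [dist_eq_norm, hc_def, norm_sub_rev]
    have dAB : dist A B = ‖b‖ := by rw [dist_eq_norm, hb_def, norm_sub_rev]
    have dAD : dist A D = ‖d‖ := by rw [dist_eq_norm, hd_def, norm_sub_rev]
    have dBD : dist B D = dist b d := by
      rw [dist_eq_norm, dist_eq_norm, hb_def, hd_def]; congr 1; abel
    have dCD : dist C D = dist c d := by
      rw [dist_eq_norm, dist_eq_norm, hc_def, hd_def]; congr 1; abel
    have dBC : dist B C = dist b c := by
      rw [dist_eq_norm, dist_eq_norm, hb_def, hc_def]; congr 1; abel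
    have hpt' : ‖c‖ * dist b d = ‖b‖ * dist c d + ‖d‖ * dist b c := by
      rw [dAC, dAB, dAD, dBD, dCD, dBC] at hpt
      linarith
    have hsum : dist b' c' + dist c' d' = dist b' d' := by
      rw [e1, e2, e3]
      field_simp
      linear_combination (-1 : ℝ) * hpt'
    have hw : Wbtw ℝ b' c' d' := dist_add_dist_eq_iff.1 hsum
    obtain ⟨t, ht, hteq⟩ := hw
    -- hteq : AffineMap.lineMap b' d' t = c'
    have hceq : c' = (1 - t) • b' + t • d' := by
      rw [← hteq]
      simp [AffineMap.lineMap_apply, vsub_eq_sub, vadd_eq_add]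
      module
    -- circumcircle of A B C
    have hind : AffineIndependent ℝ ![A, B, C] :=
      affineIndependent_iff_not_collinear_set.2 hABC
    set T : Affine.Simplex ℝ (EuclideanSpace ℝ (Fin 2)) 2 := ⟨![A, B, C], hind⟩ with hT
    set o : EuclideanSpace ℝ (Fin 2) := T.circumcenter with ho
    have hA : dist A o = T.circumradius := T.dist_circumcenter_eq_circumradius 0
    have hB : dist B o = T.circumradius := T.dist_circumcenter_eq_circumradius 1
    have hC : dist C o = T.circumradius := T.dist_circumcenter_eq_circumradius 2
    set v : EuclideanSpace ℝ (Fin 2) := o - A with hv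
    have hAv : dist A o = ‖v‖ := by rw [dist_eq_norm, hv, norm_sub_rev]
    have hBv : dist B o = ‖b - v‖ := by
      rw [dist_eq_norm, hv, hb_def]; congr 1; abel
    have hCv : dist C o = ‖c - v‖ := by
      rw [dist_eq_norm, hv, hc_def]; congr 1; abel
    have hDv : dist D o = ‖d - v‖ := by
      rw [dist_eq_norm, hv, hd_def]; congr 1; abel
    have ib : ((1 / ‖b‖ : ℝ) ^ 2) * inner ℝ b v = 1 / 2 := by
      have h := (inversion_sphere_aux hb).1 (by rw [← hBv, ← hAv, hB, hA])
      rwa [real_inner_smul_left] at h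
    have ic : ((1 / ‖c‖ : ℝ) ^ 2) * inner ℝ c v = 1 / 2 := by
      have h := (inversion_sphere_aux hc).1 (by rw [← hCv, ← hAv, hC, hA])
      rwa [real_inner_smul_left] at h
    have ht0 : t ≠ 0 := by
      rintro rfl
      have h0 : c' = b' := by rw [hceq]; simp
      rw [h0, dist_self] at e1
      have hk : (1 : ℝ) ^ 2 / (‖b‖ * ‖c‖) ≠ 0 := by positivity
      have hbc0 : dist b c = 0 := by
        rcases mul_eq_zero.1 e1.symm with h | h
        · exact absurd h hk
        · exact h
      exact hBC (dist_eq_zero.1 (dBC.trans hbc0))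
    have id2 : ((1 / ‖d‖ : ℝ) ^ 2) * inner ℝ d v = 1 / 2 := by
      have h1 := congrArg (fun w : EuclideanSpace ℝ (Fin 2) => (inner ℝ w v : ℝ)) hceq
      simp only [hb'_def, hc'_def, hd'_def, inner_add_left, real_inner_smul_left] at h1
      rw [ic, ib] at h1
      have h2 : t * (((1 / ‖d‖ : ℝ) ^ 2) * inner ℝ d v) = t * (1 / 2) := by linarith
      exact mul_left_cancel₀ ht0 h2
    have hDo : dist D o = T.circumradius := by
      rw [hDv, ← hA, hAv]
      exact (inversion_sphere_aux hd).2 (by rwa [real_inner_smul_left])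
    exact ⟨o, T.circumradius, hA, hB, hC, hDo⟩
end
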